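/- Let G be a finite abelian group and H a proper subgroup of G. Then H is a perfect code of G if and only if H₂ is a 2-pure subgroup of G₂, i.e. G₂² ∩ H₂ = H₂². -/

import Mathlib

/-- The Cayley graph of a group `G` with connection set `S`: distinct vertices `x`, `y`
are adjacent iff `y * x⁻¹ ∈ S` (for inverse-closed `S` this relation is symmetric). -/
def cayley (G : Type*) [Group G] (S : Set G) : SimpleGraph G :=
  SimpleGraph.fromRel (fun x y => y * x⁻¹ ∈ S)

/-- `C` is a perfect code in the graph `Γ`: `C` is an independent set and every vertex
outside `C` is adjacent to exactly one vertex of `C`. -/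
def IsPerfectCode {V : Type*} (Γ : SimpleGraph V) (C : Set V) : Prop :=
  (∀ u ∈ C, ∀ v ∈ C, ¬ Γ.Adj u v) ∧ ∀ v ∉ C, ∃! u, u ∈ C ∧ Γ.Adj v u

/-- `C` is a perfect code of the group `G`: there is an inverse-closed `S ⊆ G` with
`1 ∉ S` such that `C` is a perfect code in `Cay(G, S)`. -/
def IsPerfectCodeOfGroup (G : Type*) [Group G] (C : Set G) : Prop :=
  ∃ S : Set G, S⁻¹ = S ∧ (1 : G) ∉ S ∧ IsPerfectCode (cayley G S) C

/-- The Sylow `2`-subgroup of a finite abelian group: the subgroup of all elements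
whose order is a power of `2`. -/
def sylowTwo (G : Type*) [CommGroup G] : Subgroup G :=
  haveI : Fact (Nat.Prime 2) := ⟨Nat.prime_two⟩
  CommGroup.primaryComponent G 2

set_option linter.unusedSectionVars false

section Aux

variable {G : Type*} [CommGroup G] {H : Subgroup G}

lemma cayley_adj {S : Set G} (hS : S⁻¹ = S) {x y : G} :
    (cayley G S).Adj x y ↔ x ≠ y ∧ y * x⁻¹ ∈ S := by
  rw [cayley, SimpleGraph.fromRel_adj]
  constructor
  · rintro ⟨hne, h | h⟩
    · exact ⟨hne, h⟩
    · refine ⟨hne, ?_⟩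
      rw [← hS, Set.mem_inv]
      simpa using h
  · rintro ⟨hne, h⟩; exact ⟨hne, Or.inl h⟩

lemma section_inv_closed (f : G ⧸ H → G) (hinv : ∀ q, f q⁻¹ = (f q)⁻¹) :
    (f '' {q | q ≠ 1})⁻¹ = f '' {q | q ≠ 1} := by
  ext x
  simp only [Set.mem_inv, Set.mem_image, Set.mem_setOf_eq]
  constructor
  · rintro ⟨q, hq, hfq⟩
    refine ⟨q⁻¹, by simpa using hq, ?_⟩
    rw [hinv, hfq, inv_inv]
  · rintro ⟨q, hq, rfl⟩
    exact ⟨q⁻¹, by simpa using hq, by rw [hinv]⟩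

lemma code_of_section (f : G ⧸ H → G)
    (hf : ∀ q, ((f q : G) : G ⧸ H) = q) (hinv : ∀ q, f q⁻¹ = (f q)⁻¹) :
    IsPerfectCodeOfGroup G (H : Set G) := by
  have hS := section_inv_closed f hinv
  refine ⟨f '' {q | q ≠ 1}, hS, ?_, ?_, ?_⟩
  · rintro ⟨q, hq, hfq⟩
    apply hq
    have := hf q
    rw [hfq] at this
    simpa using this.symm
  · -- independence
    rintro u hu v hv hadj
    rw [cayley_adj hS] at hadj
    obtain ⟨hne, q, hq, hfq⟩ := hadj
    apply hq
    have h1 : v * u⁻¹ ∈ H := H.mul_mem hv (H.inv_mem hu)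
    have := hf q
    rw [hfq, (QuotientGroup.eq_one_iff (v * u⁻¹)).2 h1] at this
    exact this.symm
  · -- perfect domination
    intro v hv
    have hv1 : ((v : G) : G ⧸ H) ≠ 1 := fun h => hv (QuotientGroup.eq_one_iff v |>.1 h)
    refine ⟨f ((v : G ⧸ H)⁻¹) * v, ⟨?_, ?_⟩, ?_⟩
    · -- membership in H
      have : ((f ((v : G ⧸ H)⁻¹) * v : G) : G ⧸ H) = 1 := by
        rw [QuotientGroup.mk_mul, hf]
        simp
      exact (QuotientGroup.eq_one_iff _).1 this
    · -- adjacency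
      rw [cayley_adj hS]
      constructor
      · intro h
        apply hv1
        have h1 : f ((v : G ⧸ H)⁻¹) = 1 := by
          have : f ((v : G ⧸ H)⁻¹) * v = 1 * v := by rw [one_mul, ← h]
          exact mul_right_cancel this
        have h2 := hf ((v : G ⧸ H)⁻¹)
        rw [h1] at h2
        rw [QuotientGroup.mk_one] at h2
        exact inv_eq_one.mp h2.symm
      · refine ⟨(v : G ⧸ H)⁻¹, by simpa using hv1, ?_⟩
        group
    · -- uniqueness
      rintro u ⟨hu, hadj⟩
      rw [cayley_adj hS] at hadj
      obtain ⟨hne, q, hq, hfq⟩ := hadj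
      have hq' : q = (v : G ⧸ H)⁻¹ := by
        have := hf q
        rw [hfq, QuotientGroup.mk_mul] at this
        rw [← this, (QuotientGroup.eq_one_iff u).2 hu]
        simp
      have : u = f ((v : G ⧸ H)⁻¹) * v := by
        have := hfq
        rw [hq'] at this
        have := congrArg (· * v) this
        simpa using this.symm
      exact this

lemma square_of_code (hc : IsPerfectCodeOfGroup G (H : Set G)) :
    ∀ g : G, g ^ 2 ∈ H → ∃ h ∈ H, g ^ 2 = h ^ 2 := by
  intro g hg2
  by_cases hgH : g ∈ H
  · exact ⟨g, hgH, rfl⟩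
  obtain ⟨S, hS, h1S, hind, hdom⟩ := hc
  obtain ⟨u, ⟨hu, hadj⟩, -⟩ := hdom g hgH
  rw [cayley_adj hS] at hadj
  obtain ⟨hne, hs⟩ := hadj
  set t := g * u⁻¹ with ht
  have hgtu : g = t * u := by rw [ht]; group
  have htinvS : t⁻¹ ∈ S := by
    have : t⁻¹ = u * g⁻¹ := by rw [ht]; group
    rw [this]; exact hs
  have htS : t ∈ S := by
    rw [← hS]; simpa using htinvS
  have htH : t ∉ H := by
    intro h
    exact hgH (by rw [hgtu]; exact H.mul_mem h hu)
  have ht1 : t ≠ 1 := by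
    intro h; rw [h] at htS; exact h1S htS
  have ht2H : t ^ 2 ∈ H := by
    have : t ^ 2 = g ^ 2 * (u⁻¹) ^ 2 := by rw [ht, mul_pow]
    rw [this]
    exact H.mul_mem hg2 (H.pow_mem (H.inv_mem hu) 2)
  obtain ⟨w, -, hwuniq⟩ := hdom t htH
  have e1 : (1 : G) = w := by
    apply hwuniq
    refine ⟨H.one_mem, ?_⟩
    rw [cayley_adj hS]
    exact ⟨fun h => ht1 h, by simpa using htinvS⟩
  have e2 : t ^ 2 = w := by
    apply hwuniq
    refine ⟨ht2H, ?_⟩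
    rw [cayley_adj hS]
    constructor
    · intro h
      apply ht1
      have : t * t = t * 1 := by
        rw [mul_one]
        calc t * t = t ^ 2 := (sq t).symm
        _ = t := h.symm
      exact mul_left_cancel this
    · have : t ^ 2 * t⁻¹ = t := by group
      rw [this]; exact htS
  have ht2 : t ^ 2 = 1 := e2.trans e1.symm
  refine ⟨u, hu, ?_⟩
  calc g ^ 2 = t ^ 2 * u ^ 2 := by rw [hgtu, mul_pow]
  _ = u ^ 2 := by rw [ht2, one_mul]

lemma exists_good_lift (hsq : ∀ g : G, g ^ 2 ∈ H → ∃ h ∈ H, g ^ 2 = h ^ 2) (q : G ⧸ H) :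
    ∃ g : G, ((g : G) : G ⧸ H) = q ∧ (q⁻¹ = q → g ^ 2 = 1) := by
  obtain ⟨g₀, rfl⟩ := QuotientGroup.mk_surjective q
  by_cases hq : ((g₀ : G) : G ⧸ H)⁻¹ = (g₀ : G ⧸ H)
  · have hg2 : g₀ ^ 2 ∈ H := by
      rw [← QuotientGroup.eq_one_iff]
      have h1 : ((g₀ ^ 2 : G) : G ⧸ H) = (g₀ : G ⧸ H) ^ 2 := by simp
      rw [h1, sq]
      nth_rewrite 2 [← hq]
      exact mul_inv_cancel _
    obtain ⟨h, hh, hgh⟩ := hsq g₀ hg2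
    refine ⟨g₀ * h⁻¹, ?_, fun _ => ?_⟩
    · rw [QuotientGroup.mk_mul, (QuotientGroup.eq_one_iff (h⁻¹ : G)).2 (H.inv_mem hh), mul_one]
    · rw [mul_pow, hgh, inv_pow, mul_inv_cancel]
  · exact ⟨g₀, rfl, fun h => absurd h hq⟩

lemma section_of_square (hsq : ∀ g : G, g ^ 2 ∈ H → ∃ h ∈ H, g ^ 2 = h ^ 2) :
    ∃ f : G ⧸ H → G, (∀ q, ((f q : G) : G ⧸ H) = q) ∧ ∀ q, f q⁻¹ = (f q)⁻¹ := by
  classical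
  choose c hc1 hc2 using exists_good_lift hsq
  let r : G ⧸ H → G ⧸ H → Prop := fun a b => b = a ∨ b = a⁻¹
  have requiv : Equivalence r := by
    refine ⟨fun a => Or.inl rfl, ?_, ?_⟩
    · rintro a b (rfl | rfl)
      · exact Or.inl rfl
      · exact Or.inr (inv_inv a).symm
    · rintro a b c (rfl | rfl) (rfl | rfl)
      · exact Or.inl rfl
      · exact Or.inr rfl
      · exact Or.inr rfl
      · exact Or.inl (inv_inv a)
  let s : Setoid (G ⧸ H) := ⟨r, requiv⟩
  let rep : G ⧸ H → G ⧸ H := fun q => (Quotient.mk s q).out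
  have hrep1 : ∀ q, rep q = q ∨ rep q = q⁻¹ := by
    intro q
    rcases @Quotient.mk_out _ s q with h | h
    · exact Or.inl h.symm
    · exact Or.inr ((congrArg Inv.inv h).trans (inv_inv _)).symm
  have hrep2 : ∀ q, rep q⁻¹ = rep q := by
    intro q
    have h : Quotient.mk s q⁻¹ = Quotient.mk s q :=
      Quotient.sound (Or.inr (inv_inv q).symm)
    simp only [rep, h]
  refine ⟨fun q => if rep q = q then c q else (c q⁻¹)⁻¹, ?_, ?_⟩
  · intro q
    beta_reduce
    by_cases h : rep q = q
    · rw [if_pos h]; exact hc1 q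
    · rw [if_neg h]
      simp [hc1]
  · intro q
    beta_reduce
    by_cases hq : q⁻¹ = q
    · rw [hq]
      have hrq : rep q = q := by
        rcases hrep1 q with h | h
        · exact h
        · rw [hq] at h; exact h
      rw [if_pos hrq]
      exact eq_inv_of_mul_eq_one_left (by rw [if_pos hrq, ← sq]; exact hc2 q hq)
    · rcases hrep1 q with h | h
      · have h' : rep q⁻¹ ≠ q⁻¹ := by
          rw [hrep2, h]
          exact fun he => hq he.symm
        rw [if_neg h', if_pos h, inv_inv]
      · have hne : rep q ≠ q := fun he => hq (h ▸ he)
        have h' : rep q⁻¹ = q⁻¹ := by rw [hrep2, h]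
        rw [if_pos h', if_neg hne, inv_inv]

lemma mem_sylowTwo {g : G} : g ∈ sylowTwo G ↔ ∃ n : ℕ, orderOf g = 2 ^ n := by
  haveI : Fact (Nat.Prime 2) := ⟨Nat.prime_two⟩
  exact CommGroup.mem_primaryComponent_iff_orderOf

lemma mem_sylowTwo_of_dvd {g : G} {k : ℕ} (h : orderOf g ∣ 2 ^ k) : g ∈ sylowTwo G := by
  obtain ⟨j, -, hj⟩ := (Nat.dvd_prime_pow Nat.prime_two).1 h
  exact mem_sylowTwo.2 ⟨j, hj⟩

lemma zpow_sq_comm (x : G) (k : ℤ) : (x ^ k) ^ 2 = (x ^ 2) ^ k := by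
  rw [← zpow_natCast (x ^ k) 2, ← zpow_mul, ← zpow_natCast x 2, ← zpow_mul, mul_comm]

variable [Fintype G]

lemma bridge_forward (hsq : ∀ g : G, g ^ 2 ∈ H → ∃ h ∈ H, g ^ 2 = h ^ 2) :
    ((fun g : G => g ^ 2) '' (sylowTwo G : Set G)) ∩ ((H ⊓ sylowTwo G : Subgroup G) : Set G)
      = (fun g : G => g ^ 2) '' ((H ⊓ sylowTwo G : Subgroup G) : Set G) := by
  ext x
  simp only [Set.mem_inter_iff, Set.mem_image, SetLike.mem_coe, Subgroup.mem_inf]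
  constructor
  · rintro ⟨⟨a, haS, rfl⟩, haH, -⟩
    obtain ⟨h, hh, hgh⟩ := hsq a haH
    have hhS : h ∈ sylowTwo G := by
      obtain ⟨n, hn⟩ := mem_sylowTwo.1 haS
      apply mem_sylowTwo_of_dvd (k := n + 1)
      have h1 : orderOf h ∣ 2 * orderOf (h ^ 2) :=
        orderOf_dvd_of_pow_eq_one (by rw [pow_mul, pow_orderOf_eq_one])
      have h2 : orderOf (h ^ 2) ∣ 2 ^ n := by
        rw [← hgh]
        exact hn ▸ orderOf_pow_dvd 2
      calc orderOf h ∣ 2 * orderOf (h ^ 2) := h1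
      _ ∣ 2 * 2 ^ n := mul_dvd_mul_left 2 h2
      _ = 2 ^ (n + 1) := by ring
    exact ⟨h, ⟨hh, hhS⟩, hgh.symm⟩
  · rintro ⟨b, ⟨hbH, hbS⟩, rfl⟩
    exact ⟨⟨b, hbS, rfl⟩, H.pow_mem hbH 2, (sylowTwo G).pow_mem hbS 2⟩

lemma bridge_backward
    (hpure : ((fun g : G => g ^ 2) '' (sylowTwo G : Set G)) ∩ ((H ⊓ sylowTwo G : Subgroup G) : Set G)
      = (fun g : G => g ^ 2) '' ((H ⊓ sylowTwo G : Subgroup G) : Set G)) :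
    ∀ g : G, g ^ 2 ∈ H → ∃ h ∈ H, g ^ 2 = h ^ 2 := by
  intro g hg2
  set n := orderOf g with hn
  have hn0 : n ≠ 0 := (orderOf_pos g).ne'
  set a := n.factorization 2 with ha
  set m := n / 2 ^ a with hm
  have hnm : 2 ^ a * m = n := Nat.ordProj_mul_ordCompl_eq_self n 2
  have hmodd : ¬ 2 ∣ m := Nat.not_dvd_ordCompl Nat.prime_two hn0
  have hcop : IsCoprime ((2 : ℤ) ^ a) (m : ℤ) := by
    rw [show ((2 : ℤ) ^ a) = ((2 ^ a : ℕ) : ℤ) by push_cast; ring]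
    rw [Nat.isCoprime_iff_coprime]
    exact Nat.Coprime.pow_left a (Nat.coprime_ordCompl Nat.prime_two hn0)
  obtain ⟨u, v, huv⟩ := hcop
  set t := g ^ ((m : ℤ) * v) with ht
  set w := g ^ ((2 : ℤ) ^ a * u) with hw
  have hg : g = t * w := by
    have he : (m : ℤ) * v + (2 : ℤ) ^ a * u = 1 := by linear_combination huv
    rw [ht, hw, ← zpow_add, he, zpow_one]
  have htord : orderOf t ∣ 2 ^ a := by
    apply orderOf_dvd_of_pow_eq_one
    rw [ht, ← zpow_natCast (g ^ ((m : ℤ) * v)) (2 ^ a), ← zpow_mul]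
    have he : (m : ℤ) * v * ((2 ^ a : ℕ) : ℤ) = (n : ℤ) * v := by
      push_cast
      rw [show ((n : ℤ)) = ((2 : ℤ) ^ a) * (m : ℤ) by exact_mod_cast congrArg (Nat.cast : ℕ → ℤ) hnm.symm]
      ring
    rw [he, zpow_mul, zpow_natCast, hn, pow_orderOf_eq_one, one_zpow]
  have htS : t ∈ sylowTwo G := mem_sylowTwo_of_dvd htord
  have ht2H : t ^ 2 ∈ H := by
    rw [ht, zpow_sq_comm]
    exact Subgroup.zpow_mem H hg2 _
  have hx : t ^ 2 ∈ (fun g : G => g ^ 2) '' ((H ⊓ sylowTwo G : Subgroup G) : Set G) := by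
    rw [← hpure]
    refine ⟨⟨t, htS, rfl⟩, ?_⟩
    exact Subgroup.mem_inf.2 ⟨ht2H, (sylowTwo G).pow_mem htS 2⟩
  obtain ⟨b, hb, hbt⟩ := hx
  have hbH : b ∈ H := (Subgroup.mem_inf.1 hb).1
  have hword : orderOf w ∣ m := by
    apply orderOf_dvd_of_pow_eq_one
    rw [hw, ← zpow_natCast (g ^ ((2 : ℤ) ^ a * u)) m, ← zpow_mul]
    have he : (2 : ℤ) ^ a * u * (m : ℤ) = (n : ℤ) * u := by
      rw [show ((n : ℤ)) = ((2 : ℤ) ^ a) * (m : ℤ) by exact_mod_cast congrArg (Nat.cast : ℕ → ℤ) hnm.symm]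
      ring
    rw [he, zpow_mul, zpow_natCast, hn, pow_orderOf_eq_one, one_zpow]
  have hw2H : w ^ 2 ∈ H := by
    rw [hw, zpow_sq_comm]
    exact Subgroup.zpow_mem H hg2 _
  have hwH : w ∈ H := by
    set m' := orderOf w with hm'
    have hm'odd : ¬ 2 ∣ m' := fun hd => hmodd (hd.trans hword)
    have hdvd : 2 ∣ m' + 1 := by omega
    have hkey : w = (w ^ 2) ^ ((m' + 1) / 2) := by
      rw [← pow_mul, Nat.mul_div_cancel' hdvd, pow_succ, hm', pow_orderOf_eq_one, one_mul]
    rw [hkey]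
    exact H.pow_mem hw2H _
  refine ⟨b * w, H.mul_mem hbH hwH, ?_⟩
  have hbt' : b ^ 2 = t ^ 2 := hbt
  rw [mul_pow, hbt', hg, mul_pow]

end Aux

/-- For a proper subgroup `H` of a finite abelian group `G`, `H` is a perfect code of
`G` iff `H₂` is a 2-pure subgroup of `G₂`, i.e. `G₂² ∩ H₂ = H₂²`. -/
theorem perfect_code_iff_sylow_two_pure (G : Type*) [CommGroup G] [Fintype G]
    (H : Subgroup G) (hH : H ≠ ⊤) :
    IsPerfectCodeOfGroup G (H : Set G) ↔
      ((fun g : G => g ^ 2) '' (sylowTwo G : Set G)) ∩ ((H ⊓ sylowTwo G : Subgroup G) : Set G)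
        = (fun g : G => g ^ 2) '' ((H ⊓ sylowTwo G : Subgroup G) : Set G) := by
  constructor
  · intro hc
    exact bridge_forward (square_of_code hc)
  · intro hpure
    obtain ⟨f, hf, hinv⟩ := section_of_square (bridge_backward hpure)
    exact code_of_section f hf hinv
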